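/- Let u, t₁, t₂ be words in the free monoid on X such that t₁ and t₂ have the same length, both lengths are strictly less than the length of u, there exist positive integers a, b with t₁ u^b = u^a t₂, and u is neither a prefix of t₁ nor a suffix of t₂. Then t₁ is a prefix of u, t₂ is a suffix of u, and t₁ u = u t₂. -/

import Mathlib

private lemma list_main {X : Type*} (u t₁ t₂ z r s : List X)
    (hlen : t₁.length = t₂.length) (hlt : t₁.length < u.length)
    (hzr : z = u ++ r) (hzs : z = s ++ u)
    (heq : t₁ ++ z = z ++ t₂) :
    (∃ w, u = t₁ ++ w) ∧ (∃ w, u = w ++ t₂) ∧ t₁ ++ u = u ++ t₂ := by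
  set n := t₁.length with hn
  -- t₁ is a prefix of u
  have ht₁ : t₁ = u.take n := by
    have h1 : t₁ = (t₁ ++ z).take n := by simp [hn]
    rw [heq, hzr] at h1
    rw [h1, List.append_assoc, List.take_append_of_le_length hlt.le]
  -- t₂ is a suffix of u
  have ht₂ : t₂ = u.drop (u.length - n) := by
    have h2 : t₂ = (z ++ t₂).drop z.length := by simp
    rw [← heq, hzs] at h2
    have hns : n ≤ u.length := hlt.le
    have hlen' : (s ++ u).length = s.length + u.length := by simp
    rw [h2, hlen']
    have : s.length + u.length = t₁.length + (s.length + (u.length - n)) := by omega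
    rw [this, List.drop_length_add_append, List.drop_length_add_append]
  have hu1 : u = t₁ ++ u.drop n := by rw [ht₁]; simp
  have hu2 : u = u.take (u.length - n) ++ t₂ := by rw [ht₂]; simp
  refine ⟨⟨_, hu1⟩, ⟨_, hu2⟩, ?_⟩
  -- key: the two complementary pieces coincide
  set v := u.take (u.length - n) with hv
  set w := u.drop n with hw
  have hvw : v.length = w.length := by
    simp [hv, hw]
  have key : v = w := by
    have h3 : t₁ ++ (v ++ (t₂ ++ r)) = t₁ ++ (w ++ (r ++ t₂)) := by
      have := heq
      rw [hzr] at this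
      calc t₁ ++ (v ++ (t₂ ++ r)) = t₁ ++ ((v ++ t₂) ++ r) := by simp
        _ = t₁ ++ (u ++ r) := by rw [← hu2]
        _ = (u ++ r) ++ t₂ := this
        _ = ((t₁ ++ w) ++ r) ++ t₂ := by rw [← hu1]
        _ = t₁ ++ (w ++ (r ++ t₂)) := by simp
    have h4 : v ++ (t₂ ++ r) = w ++ (r ++ t₂) := List.append_cancel_left h3
    have : (v ++ (t₂ ++ r)).take v.length = (w ++ (r ++ t₂)).take v.length := by rw [h4]
    simpa [List.take_left', hvw] using this
  calc t₁ ++ u = t₁ ++ (v ++ t₂) := by rw [← hu2]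
    _ = (t₁ ++ w) ++ t₂ := by rw [key]; simp
    _ = u ++ t₂ := by rw [← hu1]

/-- If `|t₁| = |t₂| < |u|`, `t₁ u^b = u^a t₂` for some positive `a, b`, and `u`
is neither a prefix of `t₁` nor a suffix of `t₂`, then `t₁` is a prefix of `u`,
`t₂` is a suffix of `u`, and `t₁ u = u t₂`. -/
theorem stmt_7 (X : Type*) (u t₁ t₂ : FreeMonoid X)
    (hlen : t₁.length = t₂.length) (hlt : t₁.length < u.length)
    (a b : ℕ) (ha : 0 < a) (hb : 0 < b) (heq : t₁ * u ^ b = u ^ a * t₂)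
    (hpre : ¬ ∃ w : FreeMonoid X, t₁ = u * w)
    (hsuf : ¬ ∃ w : FreeMonoid X, t₂ = w * u) :
    (∃ w : FreeMonoid X, u = t₁ * w) ∧ (∃ w : FreeMonoid X, u = w * t₂) ∧
      t₁ * u = u * t₂ := by
  -- lengths force a = b
  have lenpow : ∀ n : ℕ, (u ^ n).length = n * u.length := by
    intro n
    induction n with
    | zero => simp
    | succ k ih => rw [pow_succ, FreeMonoid.length_mul, ih]; ring
  have hab : a = b := by
    have := congrArg FreeMonoid.length heq
    rw [FreeMonoid.length_mul, FreeMonoid.length_mul, lenpow, lenpow, hlen] at this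
    have hu0 : 0 < u.length := lt_of_le_of_lt (Nat.zero_le _) hlt
    have : b * u.length = a * u.length := by omega
    exact (Nat.eq_of_mul_eq_mul_right hu0 this).symm
  subst hab
  have hzr : u ^ a = u * u ^ (a - 1) := by
    rw [← pow_succ']; congr 1; omega
  have hzs : u ^ a = u ^ (a - 1) * u := by
    rw [← pow_succ]; congr 1; omega
  have main := list_main u.toList t₁.toList t₂.toList (u ^ a).toList
      (u ^ (a - 1)).toList (u ^ (a - 1)).toList hlen hlt
      (by rw [hzr]; rfl) (by rw [hzs]; rfl)
      (by rw [← FreeMonoid.toList_mul, ← FreeMonoid.toList_mul, heq])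
  obtain ⟨⟨w1, hw1⟩, ⟨w2, hw2⟩, h3⟩ := main
  refine ⟨⟨FreeMonoid.ofList w1, ?_⟩, ⟨FreeMonoid.ofList w2, ?_⟩, ?_⟩
  · apply FreeMonoid.toList.injective; simpa using hw1
  · apply FreeMonoid.toList.injective; simpa using hw2
  · apply FreeMonoid.toList.injective; simpa using h3
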